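/- Let α, β ∈ (0,1) with α + β > 1. There exists a constant C depending only on α and β such that for all continuous 2π-periodic functions f, g : ℝ → ℝ, if f is α-Hölder with constant C_f and g is β-Hölder with constant C_g, then their circle convolution h is continuously differentiable on ℝ, its derivative satisfies |h′(t)| ≤ (C/(α+β−1)) · C_f · C_g for all t, and h′ is (α+β−1)-Hölder: |h′(t) − h′(s)| ≤ C · C_f · C_g · |t − s|^(α+β−1) for all t, s ∈ ℝ. -/

import Mathlib

open intervalIntegral Real Filter



noncomputable def EE (f g : ℝ → ℝ) (δ t : ℝ) : ℝ :=
  ∫ x in (0:ℝ)..(2 * Real.pi), (f (x + δ) - f x) * g (t - x)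

lemma per_shift (F : ℝ → ℝ) (pF : ∀ x, F (x + 2 * Real.pi) = F x) (c : ℝ) :
    ∫ x in c..(c + 2 * Real.pi), F x = ∫ x in (0:ℝ)..(2 * Real.pi), F x := by
  have : Function.Periodic F (2 * Real.pi) := pF
  simpa using this.intervalIntegral_add_eq c 0

lemma conv_shift (f g : ℝ → ℝ) (pf : ∀ x, f (x + 2 * Real.pi) = f x)
    (pg : ∀ x, g (x + 2 * Real.pi) = g x) (t δ : ℝ) :
    (∫ x in (0:ℝ)..(2 * Real.pi), f x * g (t + δ - x))
      = ∫ x in (0:ℝ)..(2 * Real.pi), f (x + δ) * g (t - x) := by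
  have key : (∫ x in (0:ℝ)..(2 * Real.pi), (fun y => f (y + δ) * g (t - y)) (x - δ))
      = ∫ x in (0:ℝ) - δ..(2 * Real.pi) - δ, f (x + δ) * g (t - x) :=
    intervalIntegral.integral_comp_sub_right (fun y => f (y + δ) * g (t - y)) δ
  have e1 : ∀ x : ℝ, f x * g (t + δ - x) = (fun y => f (y + δ) * g (t - y)) (x - δ) := by
    intro x; simp only []; rw [sub_add_cancel]; ring_nf
  have per : ∀ y, (fun y => f (y + δ) * g (t - y)) (y + 2 * Real.pi)
      = (fun y => f (y + δ) * g (t - y)) y := by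
    intro y
    have hg' : g (t - (y + 2 * Real.pi)) = g (t - y) := by
      have := pg (t - (y + 2 * Real.pi)); rw [← this]; ring_nf
    simp only []
    rw [show y + 2 * Real.pi + δ = (y + δ) + 2 * Real.pi by ring, pf, hg']
  calc (∫ x in (0:ℝ)..(2 * Real.pi), f x * g (t + δ - x))
      = ∫ x in (0:ℝ)..(2 * Real.pi), (fun y => f (y + δ) * g (t - y)) (x - δ) := by
        apply intervalIntegral.integral_congr; intro x _; exact e1 x
    _ = ∫ x in (0:ℝ) - δ..(2 * Real.pi) - δ, f (x + δ) * g (t - x) := key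
    _ = ∫ x in (0:ℝ)..(2 * Real.pi), f (x + δ) * g (t - x) := by
        have := per_shift (fun y => f (y + δ) * g (t - y)) per (0 - δ)
        rw [show (0:ℝ) - δ + 2 * Real.pi = 2 * Real.pi - δ by ring] at this
        simpa using this



section
variable (f g : ℝ → ℝ)

-- h(t+δ) - h(t) = EE δ t
lemma hdiff (hf : Continuous f) (hg : Continuous g) (pf : ∀ x, f (x + 2 * Real.pi) = f x)
    (pg : ∀ x, g (x + 2 * Real.pi) = g x) (t δ : ℝ)
    (cs : (∫ x in (0:ℝ)..(2 * Real.pi), f x * g (t + δ - x))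
      = ∫ x in (0:ℝ)..(2 * Real.pi), f (x + δ) * g (t - x)) :
    (∫ x in (0:ℝ)..(2 * Real.pi), f x * g (t + δ - x))
      - (∫ x in (0:ℝ)..(2 * Real.pi), f x * g (t - x)) = EE f g δ t := by
  rw [cs, EE, ← intervalIntegral.integral_sub]
  · apply intervalIntegral.integral_congr; intro x _; ring
  · exact ((hf.comp (continuous_id.add continuous_const)).mul
      (hg.comp (continuous_const.sub continuous_id))).intervalIntegrable _ _
  · exact (hf.mul (hg.comp (continuous_const.sub continuous_id))).intervalIntegrable _ _

-- c1: modulus of continuity in t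
lemma c1 (hf : Continuous f) (hg : Continuous g) (Cf Cg α β : ℝ) (hCf : 0 ≤ Cf) (hCg : 0 ≤ Cg)
    (Hf : ∀ x y, |f x - f y| ≤ Cf * |x - y| ^ α)
    (Hg : ∀ x y, |g x - g y| ≤ Cg * |x - y| ^ β)
    (δ t s : ℝ) :
    |EE f g δ t - EE f g δ s| ≤ 2 * Real.pi * Cf * Cg * |δ| ^ α * |t - s| ^ β := by
  have hint : ∀ u : ℝ, IntervalIntegrable
      (fun x => (f (x + δ) - f x) * g (u - x)) MeasureTheory.volume 0 (2*Real.pi) := by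
    intro u
    exact (((hf.comp (continuous_id.add continuous_const)).sub hf).mul
      (hg.comp (continuous_const.sub continuous_id))).intervalIntegrable _ _
  have e : EE f g δ t - EE f g δ s
      = ∫ x in (0:ℝ)..(2 * Real.pi), (f (x + δ) - f x) * (g (t - x) - g (s - x)) := by
    rw [EE, EE, ← intervalIntegral.integral_sub (hint t) (hint s)]
    apply intervalIntegral.integral_congr; intro x _; ring
  rw [e]
  have hb : ∀ x ∈ Set.uIoc (0:ℝ) (2*Real.pi),
      ‖(f (x + δ) - f x) * (g (t - x) - g (s - x))‖ ≤ (Cf * |δ| ^ α) * (Cg * |t - s| ^ β) := by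
    intro x _
    rw [Real.norm_eq_abs, abs_mul]
    apply mul_le_mul
    · have := Hf (x + δ) x; simpa using this
    · have := Hg (t - x) (s - x)
      simpa [show t - x - (s - x) = t - s by ring] using this
    · exact abs_nonneg _
    · positivity
  have := intervalIntegral.norm_integral_le_of_norm_le_const hb
  rw [Real.norm_eq_abs] at this
  calc |∫ x in (0:ℝ)..(2 * Real.pi), (f (x + δ) - f x) * (g (t - x) - g (s - x))|
      ≤ (Cf * |δ| ^ α) * (Cg * |t - s| ^ β) * |2 * Real.pi - 0| := this
    _ = 2 * Real.pi * Cf * Cg * |δ| ^ α * |t - s| ^ β := by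
        rw [sub_zero, abs_of_pos (by positivity : (0:ℝ) < 2 * Real.pi)]; ring

-- c3
lemma c3 (pf : ∀ x, f (x + 2 * Real.pi) = f x) (t : ℝ) : EE f g (2 * Real.pi) t = 0 := by
  rw [EE]
  have : ∀ x ∈ Set.uIcc (0:ℝ) (2*Real.pi),
      (f (x + 2 * Real.pi) - f x) * g (t - x) = (0:ℝ) := by
    intro x _; rw [pf]; ring
  rw [intervalIntegral.integral_congr this]; simp

end



lemma c2 (f g : ℝ → ℝ) (hf : Continuous f) (hg : Continuous g)
    (pf : ∀ x, f (x + 2 * Real.pi) = f x) (pg : ∀ x, g (x + 2 * Real.pi) = g x)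
    (δ t : ℝ) :
    EE f g δ t = EE f g (δ/2) t + EE f g (δ/2) (t + δ/2) := by
  set Ψ : ℝ → ℝ := fun y => (f (y + δ/2) - f y) * g (t + δ/2 - y) with hΨ
  have perΨ : ∀ y, Ψ (y + 2 * Real.pi) = Ψ y := by
    intro y
    have h1 : f (y + 2 * Real.pi + δ/2) = f (y + δ/2) := by
      rw [show y + 2 * Real.pi + δ/2 = (y + δ/2) + 2 * Real.pi by ring, pf]
    have h2 : g (t + δ/2 - (y + 2 * Real.pi)) = g (t + δ/2 - y) := by
      have := pg (t + δ/2 - (y + 2 * Real.pi))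
      rw [← this]; ring_nf
    simp only [hΨ, h1, h2, pf]
  have second : (∫ x in (0:ℝ)..(2 * Real.pi), Ψ (x + δ/2))
      = EE f g (δ/2) (t + δ/2) := by
    rw [intervalIntegral.integral_comp_add_right Ψ (δ/2)]
    have := per_shift Ψ perΨ (0 + δ/2)
    rw [show (0:ℝ) + δ/2 + 2 * Real.pi = 2 * Real.pi + δ/2 by ring] at this
    rw [this]; rfl
  have split : EE f g δ t = (∫ x in (0:ℝ)..(2 * Real.pi), (f (x + δ/2) - f x) * g (t - x))
      + ∫ x in (0:ℝ)..(2 * Real.pi), Ψ (x + δ/2) := by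
    rw [EE, ← intervalIntegral.integral_add]
    · apply intervalIntegral.integral_congr; intro x _
      simp only [hΨ]
      rw [show x + δ/2 + δ/2 = x + δ by ring, show t + δ/2 - (x + δ/2) = t - x by ring]
      ring
    · exact (((hf.comp (continuous_id.add continuous_const)).sub hf).mul
        (hg.comp (continuous_const.sub continuous_id))).intervalIntegrable _ _
    · have : Continuous Ψ := ((hf.comp (continuous_id.add continuous_const)).sub hf).mul
        (hg.comp (continuous_const.sub continuous_id))
      exact (this.comp (continuous_id.add continuous_const)).intervalIntegrable _ _
  rw [split, second]; rfl


lemma tail_bound {u : ℕ → ℝ} {K r : ℝ} (hK : 0 ≤ K) (hr0 : 0 ≤ r) (hr1 : r < 1)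
    (hb : ∀ n, |u n| ≤ K * r ^ (n + 1)) (N : ℕ) :
    |(∑' n, u n) - ∑ n ∈ Finset.range N, u n| ≤ K * r ^ (N + 1) / (1 - r) := by
  have hgeo : Summable (fun n : ℕ => r ^ n) := summable_geometric_of_lt_one hr0 hr1
  have hg : Summable (fun n : ℕ => K * r ^ (n + 1)) :=
    ((hgeo.mul_left (K * r)).congr (fun n => by ring))
  have hsum : Summable u := Summable.of_norm_bounded hg (fun n => by
    simpa [Real.norm_eq_abs] using hb n)
  have key := Summable.sum_add_tsum_nat_add N hsum
  have e : (∑' n, u n) - ∑ n ∈ Finset.range N, u n = ∑' i, u (i + N) := by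
    rw [← key]; ring
  rw [e]
  have hnorm : Summable (fun i : ℕ => ‖u (i + N)‖) := by
    apply Summable.of_nonneg_of_le (fun i => norm_nonneg _)
      (fun i => by simpa [Real.norm_eq_abs] using hb (i + N))
    exact (hg.comp_injective (add_left_injective N))
  have h1 : ‖∑' i, u (i + N)‖ ≤ ∑' i, ‖u (i + N)‖ := norm_tsum_le_tsum_norm hnorm
  have h2 : (∑' i, ‖u (i + N)‖) ≤ ∑' i : ℕ, (K * r ^ (N + 1)) * r ^ i := by
    apply Summable.tsum_le_tsum _ hnorm (hgeo.mul_left _)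
    intro i
    calc ‖u (i + N)‖ ≤ K * r ^ (i + N + 1) := by
          simpa [Real.norm_eq_abs] using hb (i + N)
      _ = K * r ^ (N + 1) * r ^ i := by rw [mul_assoc, ← pow_add]; ring_nf
  have h3 : (∑' i : ℕ, (K * r ^ (N + 1)) * r ^ i) = K * r ^ (N + 1) / (1 - r) := by
    rw [tsum_mul_left, tsum_geometric_of_lt_one hr0 hr1, div_eq_mul_inv]
  rw [Real.norm_eq_abs] at h1
  linarith [h1.trans (h2.trans_eq h3)]

lemma pow_half_rpow (σ : ℝ) (m : ℕ) : ((1/2:ℝ) ^ m) ^ σ = ((1/2:ℝ) ^ σ) ^ m := by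
  rw [← Real.rpow_natCast ((1/2:ℝ)) m, ← Real.rpow_natCast ((1/2:ℝ) ^ σ) m,
    ← Real.rpow_mul (by norm_num), ← Real.rpow_mul (by norm_num), mul_comm]

lemma delta_rpow (σ : ℝ) (m : ℕ) :
    (2 * Real.pi / 2 ^ m) ^ σ = (2 * Real.pi) ^ σ * ((1/2:ℝ) ^ σ) ^ m := by
  have h : 2 * Real.pi / 2 ^ m = 2 * Real.pi * (1/2:ℝ) ^ m := by
    rw [div_eq_mul_inv, ← inv_pow]; norm_num
  rw [h, Real.mul_rpow (by positivity) (by positivity), pow_half_rpow]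

set_option maxHeartbeats 2000000 in
/-- Regularity of circle convolution of Hölder functions, case `α + β > 1`:
the convolution is `C¹`, with derivative bounded by `(C/(α+β−1))·C_f·C_g` and
`(α+β−1)`-Hölder with constant `C·C_f·C_g`, where `C` depends only on `α`, `β`. -/
theorem stmt_2 (α β : ℝ) (hα : α ∈ Set.Ioo (0:ℝ) 1) (hβ : β ∈ Set.Ioo (0:ℝ) 1)
    (hαβ : 1 < α + β) :
    ∃ C : ℝ, 0 < C ∧
      ∀ (f g : ℝ → ℝ) (Cf Cg : ℝ), 0 ≤ Cf → 0 ≤ Cg →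
        Continuous f → Continuous g →
        (∀ x, f (x + 2 * Real.pi) = f x) →
        (∀ x, g (x + 2 * Real.pi) = g x) →
        (∀ x y, |f x - f y| ≤ Cf * |x - y| ^ α) →
        (∀ x y, |g x - g y| ≤ Cg * |x - y| ^ β) →
        ∃ h' : ℝ → ℝ, Continuous h' ∧
          (∀ t : ℝ, HasDerivAt
            (fun u => ∫ x in (0:ℝ)..(2 * Real.pi), f x * g (u - x)) (h' t) t) ∧
          (∀ t : ℝ, |h' t| ≤ C / (α + β - 1) * Cf * Cg) ∧
          (∀ t s : ℝ, |h' t - h' s| ≤ C * Cf * Cg * |t - s| ^ (α + β - 1)) := by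
  obtain ⟨hα0, hα1⟩ := hα
  obtain ⟨hβ0, hβ1⟩ := hβ
  have hπ : (0:ℝ) < Real.pi := Real.pi_pos
  have h2π1 : (1:ℝ) ≤ 2 * Real.pi := by nlinarith [Real.pi_gt_three]
  set σ : ℝ := α + β - 1 with hσdef
  have hσ0 : 0 < σ := by rw [hσdef]; linarith
  have hσ1 : σ ≤ 1 := by rw [hσdef]; linarith
  set r : ℝ := (1/2:ℝ) ^ σ with hrdef
  have hr0 : 0 < r := Real.rpow_pos_of_pos (by norm_num) σ
  have hr1 : r < 1 := Real.rpow_lt_one (by norm_num) (by norm_num) hσ0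
  have h1r : 0 < 1 - r := by linarith
  have h2πσ : (0:ℝ) < (2 * Real.pi) ^ σ := Real.rpow_pos_of_pos (by positivity) σ
  set P0 : ℝ := Real.pi * (2 * Real.pi) ^ σ / (1 - r) with hP0def
  set Q1 : ℝ := 2 * Real.pi / (1 - r) + 2 * Real.pi * (2:ℝ) ^ (1 - α) with hQ1def
  have hP0pos : 0 < P0 := by rw [hP0def]; positivity
  have hQ1pos : 0 < Q1 := by
    rw [hQ1def]
    have : (0:ℝ) < (2:ℝ) ^ (1 - α) := Real.rpow_pos_of_pos (by norm_num) _
    positivity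
  refine ⟨σ * P0 + Q1 + 2 * P0, by positivity, ?_⟩
  intro f g Cf Cg hCf hCg hfc hgc pf pg Hf Hg
  set h : ℝ → ℝ := fun u => ∫ x in (0:ℝ)..(2 * Real.pi), f x * g (u - x) with hhdef
  have hconth : Continuous h := by
    apply intervalIntegral.continuous_parametric_intervalIntegral_of_continuous'
    exact (hfc.comp continuous_snd).mul (hgc.comp (continuous_fst.sub continuous_snd))
  have hDiff : ∀ (δ t : ℝ), h (t + δ) - h t = EE f g δ t := by
    intro δ t
    exact hdiff f g hfc hgc pf pg t δ (conv_shift f g pf pg t δ)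
  set δn : ℕ → ℝ := fun n => 2 * Real.pi / 2 ^ n with hδndef
  have hδpos : ∀ n, 0 < δn n := fun n => by rw [hδndef]; positivity
  have hδhalf : ∀ n, δn (n + 1) = δn n / 2 := by
    intro n; rw [hδndef]; simp only [pow_succ]; field_simp
  set D : ℕ → ℝ → ℝ := fun n t => EE f g (δn n) t / δn n with hDdef
  set M : ℝ := 2 * Real.pi * Cf * Cg with hMdef
  have hM0 : 0 ≤ M := by rw [hMdef]; positivity
  have hDmod : ∀ n t s, |D n t - D n s| ≤ M * (δn n) ^ α / δn n * |t - s| ^ β := by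
    intro n t s
    have hc1 := c1 f g hfc hgc Cf Cg α β hCf hCg Hf Hg (δn n) t s
    rw [abs_of_pos (hδpos n)] at hc1
    have e : D n t - D n s = (EE f g (δn n) t - EE f g (δn n) s) / δn n := by
      rw [hDdef]; ring
    rw [e, abs_div, abs_of_pos (hδpos n)]
    rw [div_mul_eq_mul_div, div_le_div_iff₀ (hδpos n) (hδpos n)]
    calc |EE f g (δn n) t - EE f g (δn n) s| * δn n
        ≤ (2 * Real.pi * Cf * Cg * δn n ^ α * |t - s| ^ β) * δn n := by
          apply mul_le_mul_of_nonneg_right hc1 (hδpos n).le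
      _ = M * δn n ^ α * |t - s| ^ β * δn n := by rw [hMdef]
  have hrec : ∀ n t, D n t = (D (n + 1) t + D (n + 1) (t + δn (n + 1))) / 2 := by
    intro n t
    have h2 := c2 f g hfc hgc pf pg (δn n) t
    have e : δn n / 2 = δn (n + 1) := (hδhalf n).symm
    have hδ2 : δn n = 2 * δn (n + 1) := by rw [hδhalf]; ring
    have halg : ∀ A B d : ℝ, d ≠ 0 → (A + B) / (2 * d) = (A / d + B / d) / 2 := by
      intro A B d hd; rw [← add_div A B d, div_div, mul_comm]
    show EE f g (δn n) t / δn n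
      = (EE f g (δn (n + 1)) t / δn (n + 1)
        + EE f g (δn (n + 1)) (t + δn (n + 1)) / δn (n + 1)) / 2
    rw [h2, e, hδ2]
    exact halg _ _ _ (hδpos (n + 1)).ne'
  have hub : ∀ n t, |D (n + 1) t - D n t| ≤ M / 2 * (2 * Real.pi) ^ σ * r ^ (n + 1) := by
    intro n t
    have hmod := hDmod (n + 1) t (t + δn (n + 1))
    have habs : |t - (t + δn (n + 1))| = δn (n + 1) := by
      rw [abs_sub_comm, add_sub_cancel_left, abs_of_pos (hδpos _)]
    rw [habs] at hmod
    have e1 : D (n + 1) t - D n t = (D (n + 1) t - D (n + 1) (t + δn (n + 1))) / 2 := by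
      rw [hrec n t]; ring
    have key : M * δn (n + 1) ^ α / δn (n + 1) * δn (n + 1) ^ β
        = M * δn (n + 1) ^ σ := by
      rw [hσdef]
      rw [div_mul_eq_mul_div, mul_assoc, ← Real.rpow_add (hδpos (n + 1))]
      rw [show α + β - 1 = (α + β) - 1 from rfl, Real.rpow_sub (hδpos (n + 1)), Real.rpow_one]
      ring
    have e2 : δn (n + 1) ^ σ = (2 * Real.pi) ^ σ * r ^ (n + 1) := by
      rw [hδndef, hrdef]; exact delta_rpow σ (n + 1)
    rw [e1, abs_div, abs_two]
    rw [key, e2] at hmod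
    calc |D (n + 1) t - D (n + 1) (t + δn (n + 1))| / 2
        ≤ (M * ((2 * Real.pi) ^ σ * r ^ (n + 1))) / 2 := by
          apply div_le_div_of_nonneg_right hmod (by norm_num)
      _ = M / 2 * (2 * Real.pi) ^ σ * r ^ (n + 1) := by ring
  set K : ℝ := M / 2 * (2 * Real.pi) ^ σ with hKdef
  have hK0 : 0 ≤ K := by rw [hKdef]; positivity
  set φ : ℝ → ℝ := fun t => ∑' n, (D (n + 1) t - D n t) with hφdef
  have hD0 : ∀ t, D 0 t = 0 := by
    intro t
    rw [hDdef]
    simp only []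
    have : δn 0 = 2 * Real.pi := by rw [hδndef]; norm_num
    rw [this, c3 f g pf t, zero_div]
  have htail : ∀ N t, |φ t - D N t| ≤ K * r ^ (N + 1) / (1 - r) := by
    intro N t
    have hp : ∑ n ∈ Finset.range N, (D (n + 1) t - D n t) = D N t := by
      rw [Finset.sum_range_sub (fun n => D n t) N, hD0 t, sub_zero]
    have := tail_bound hK0 hr0.le hr1 (fun n => hub n t) N
    rw [hp] at this
    exact this
  have hgsum : Summable (fun n : ℕ => K * r ^ (n + 1)) :=
    ((summable_geometric_of_lt_one hr0.le hr1).mul_left (K * r)).congr (fun n => by ring)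
  have hDh : ∀ n t, D n t = (h (t + δn n) - h t) / δn n := by
    intro n t
    rw [hDdef]
    simp only []
    rw [hDiff (δn n) t]
  have hDcont : ∀ n, Continuous (fun t => D n t) := by
    intro n
    have e : (fun t => D n t) = fun t => (h (t + δn n) - h t) / δn n := funext (hDh n)
    rw [e]
    exact ((hconth.comp (continuous_id.add continuous_const)).sub hconth).div_const _
  have hφcont : Continuous φ := by
    rw [hφdef]
    apply continuous_tsum (fun n => (hDcont (n + 1)).sub (hDcont n)) hgsum
    intro n t
    simpa [Real.norm_eq_abs] using hub n t
  have hφb : ∀ t, |φ t| ≤ Cf * Cg * P0 := by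
    intro t
    have := htail 0 t
    rw [hD0 t, sub_zero] at this
    calc |φ t| ≤ K * r ^ (0 + 1) / (1 - r) := this
      _ ≤ K * 1 / (1 - r) := by
          apply div_le_div_of_nonneg_right _ h1r.le
          have : r ^ (0 + 1 : ℕ) ≤ 1 := by
            rw [pow_one]; exact hr1.le
          nlinarith [hK0]
      _ = Cf * Cg * P0 := by
          rw [hKdef, hMdef, hP0def]; field_simp
  -- FTC part
  set G : ℝ → ℝ := fun x => ∫ s in (0:ℝ)..x, h s with hGdef
  have hG : ∀ x, HasDerivAt G (h x) x := by
    intro x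
    exact intervalIntegral.integral_hasDerivAt_right (hconth.intervalIntegrable _ _)
      (hconth.stronglyMeasurableAtFilter _ _) hconth.continuousAt
  have hδseq : Filter.Tendsto (fun n : ℕ => δn n) Filter.atTop (nhds 0) := by
    have e : (fun n : ℕ => δn n) = fun n : ℕ => 2 * Real.pi * (1/2:ℝ) ^ n := by
      funext n
      show 2 * Real.pi / 2 ^ n = 2 * Real.pi * (1/2:ℝ) ^ n
      rw [div_eq_mul_inv, ← inv_pow]; norm_num
    rw [e]
    simpa using (tendsto_pow_atTop_nhds_zero_of_lt_one (by norm_num : (0:ℝ) ≤ 1/2)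
      (by norm_num : (1/2:ℝ) < 1)).const_mul (2 * Real.pi)
  have hslope : ∀ a : ℝ, Filter.Tendsto (fun n : ℕ => (G (a + δn n) - G a) / δn n)
      Filter.atTop (nhds (h a)) := by
    intro a
    have h1 := hasDerivAt_iff_tendsto_slope.mp (hG a)
    have h2 : Filter.Tendsto (fun n : ℕ => a + δn n) Filter.atTop (nhdsWithin a {a}ᶜ) := by
      apply tendsto_nhdsWithin_of_tendsto_nhds_of_eventually_within
      · simpa using tendsto_const_nhds.add hδseq
      · filter_upwards with n
        simp only [Set.mem_compl_iff, Set.mem_singleton_iff]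
        intro hcon
        exact (hδpos n).ne' (by linarith [hcon] : δn n = 0)
    have h3 := h1.comp h2
    have e : (fun n : ℕ => slope G a (a + δn n)) = fun n : ℕ => (G (a + δn n) - G a) / δn n := by
      funext n
      rw [slope_def_field]
      rw [add_sub_cancel_left]
    rw [← e]
    exact h3
  have hintD : ∀ n t, (∫ s in (0:ℝ)..t, D n s)
      = (G (t + δn n) - G t) / δn n - (G (0 + δn n) - G 0) / δn n := by
    intro n t
    have e1 : (∫ s in (0:ℝ)..t, D n s)
        = ∫ s in (0:ℝ)..t, (h (s + δn n) - h s) / δn n := by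
      apply intervalIntegral.integral_congr
      intro s _
      exact hDh n s
    have hint1 : IntervalIntegrable (fun s => h (s + δn n)) MeasureTheory.volume 0 t :=
      (hconth.comp (continuous_id.add continuous_const)).intervalIntegrable _ _
    have hint2 : IntervalIntegrable h MeasureTheory.volume 0 t := hconth.intervalIntegrable _ _
    have e2 : (∫ s in (0:ℝ)..t, (h (s + δn n) - h s) / δn n)
        = ((∫ s in (0:ℝ)..t, h (s + δn n)) - ∫ s in (0:ℝ)..t, h s) / δn n := by
      rw [intervalIntegral.integral_div, intervalIntegral.integral_sub hint1 hint2]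
    have e3 : (∫ s in (0:ℝ)..t, h (s + δn n)) = ∫ s in (0 + δn n)..(t + δn n), h s :=
      intervalIntegral.integral_comp_add_right h (δn n)
    have e4 : (∫ s in (0 + δn n)..(t + δn n), h s) = G (t + δn n) - G (0 + δn n) := by
      rw [hGdef]
      simp only []
      rw [← intervalIntegral.integral_interval_sub_left
        (hconth.intervalIntegrable 0 (t + δn n)) (hconth.intervalIntegrable 0 (0 + δn n))]
    have hG0 : G 0 = 0 := by rw [hGdef]; simp
    rw [e1, e2, e3, e4, hG0]
    ring
  have hrepr : ∀ t, h t = h 0 + ∫ s in (0:ℝ)..t, φ s := by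
    intro t
    have lim2 : Filter.Tendsto
        (fun n : ℕ => (G (t + δn n) - G t) / δn n - (G (0 + δn n) - G 0) / δn n)
        Filter.atTop (nhds (h t - h 0)) := by
      have := (hslope t).sub (hslope 0)
      simpa using this
    have lim1 : Filter.Tendsto (fun n : ℕ => ∫ s in (0:ℝ)..t, D n s)
        Filter.atTop (nhds (∫ s in (0:ℝ)..t, φ s)) := by
      have hbnd : ∀ n : ℕ, ‖(∫ s in (0:ℝ)..t, D n s) - ∫ s in (0:ℝ)..t, φ s‖
          ≤ K * r ^ (n + 1) / (1 - r) * |t - 0| := by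
        intro n
        rw [← intervalIntegral.integral_sub ((hDcont n).intervalIntegrable _ _)
          (hφcont.intervalIntegrable _ _)]
        apply intervalIntegral.norm_integral_le_of_norm_le_const
        intro x _
        rw [Real.norm_eq_abs, abs_sub_comm]
        exact htail n x
      have hlim0 : Filter.Tendsto (fun n : ℕ => K * r ^ (n + 1) / (1 - r) * |t - 0|)
          Filter.atTop (nhds 0) := by
        have e : (fun n : ℕ => K * r ^ (n + 1) / (1 - r) * |t - 0|)
            = fun n : ℕ => (K * r / (1 - r) * |t - 0|) * r ^ n := by
          funext n; ring
        rw [e]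
        simpa using (tendsto_pow_atTop_nhds_zero_of_lt_one hr0.le hr1).const_mul
          (K * r / (1 - r) * |t - 0|)
      have h0 := squeeze_zero_norm hbnd hlim0
      have := h0.add_const (∫ s in (0:ℝ)..t, φ s)
      simpa using this
    have lim1' : Filter.Tendsto (fun n : ℕ => ∫ s in (0:ℝ)..t, D n s)
        Filter.atTop (nhds (h t - h 0)) := by
      apply lim2.congr
      intro n
      exact (hintD n t).symm
    have := tendsto_nhds_unique lim1 lim1'
    linarith
  refine ⟨φ, hφcont, ?_, ?_, ?_⟩
  · intro t
    have hd : HasDerivAt (fun x : ℝ => h 0 + ∫ s in (0:ℝ)..x, φ s) (φ t) t := by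
      apply HasDerivAt.const_add
      exact intervalIntegral.integral_hasDerivAt_right (hφcont.intervalIntegrable _ _)
        (hφcont.stronglyMeasurableAtFilter _ _) hφcont.continuousAt
    exact hd.congr_of_eventuallyEq (Filter.Eventually.of_forall hrepr)
  · intro t
    have h1 := hφb t
    have h2 : P0 ≤ (σ * P0 + Q1 + 2 * P0) / σ := by
      rw [le_div_iff₀ hσ0]
      nlinarith [hP0pos, hQ1pos]
    calc |φ t| ≤ Cf * Cg * P0 := h1
      _ ≤ Cf * Cg * ((σ * P0 + Q1 + 2 * P0) / σ) := by
          apply mul_le_mul_of_nonneg_left h2 (by positivity)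
      _ = (σ * P0 + Q1 + 2 * P0) / σ * Cf * Cg := by ring
  · intro t s
    by_cases hd0 : t = s
    · subst hd0
      simp [Real.zero_rpow hσ0.ne']
    · have hdpos : 0 < |t - s| := by
        rw [abs_pos, sub_ne_zero]; exact hd0
      have hCge0 : (0:ℝ) ≤ σ * P0 + Q1 + 2 * P0 := by positivity
      by_cases hbig : 2 * Real.pi ≤ |t - s|
      · have h1d : (1:ℝ) ≤ |t - s| := le_trans h2π1 hbig
        have hdσ : (1:ℝ) ≤ |t - s| ^ σ := by
          calc (1:ℝ) = 1 ^ σ := (Real.one_rpow σ).symm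
            _ ≤ |t - s| ^ σ := Real.rpow_le_rpow (by norm_num) h1d hσ0.le
        have step1 : |φ t - φ s| ≤ |φ t| + |φ s| := by
          rw [sub_eq_add_neg]
          exact (abs_add_le _ _).trans (by rw [abs_neg])
        have hσP0 : 0 ≤ σ * P0 := mul_nonneg hσ0.le hP0pos.le
        have step2 : |φ t| + |φ s| ≤ 2 * P0 * (Cf * Cg) := by
          calc |φ t| + |φ s| ≤ Cf * Cg * P0 + Cf * Cg * P0 := add_le_add (hφb t) (hφb s)
            _ = 2 * P0 * (Cf * Cg) := by ring
        have step3 : 2 * P0 * (Cf * Cg) ≤ (σ * P0 + Q1 + 2 * P0) * (Cf * Cg) :=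
          mul_le_mul_of_nonneg_right (by linarith) (mul_nonneg hCf hCg)
        have step4 : (σ * P0 + Q1 + 2 * P0) * (Cf * Cg)
            ≤ (σ * P0 + Q1 + 2 * P0) * (Cf * Cg) * |t - s| ^ σ :=
          le_mul_of_one_le_right (mul_nonneg hCge0 (mul_nonneg hCf hCg)) hdσ
        calc |φ t - φ s| ≤ 2 * P0 * (Cf * Cg) := step1.trans step2
          _ ≤ (σ * P0 + Q1 + 2 * P0) * (Cf * Cg) * |t - s| ^ σ := step3.trans step4
          _ = (σ * P0 + Q1 + 2 * P0) * Cf * Cg * |t - s| ^ σ := by ring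
      · push_neg at hbig
        have hex : ∃ k : ℕ, δn k ≤ |t - s| := by
          obtain ⟨k, hk⟩ := exists_pow_lt_of_lt_one
            (show (0:ℝ) < |t - s| / (2 * Real.pi) by positivity)
            (show (1/2:ℝ) < 1 by norm_num)
          refine ⟨k, ?_⟩
          have e : δn k = 2 * Real.pi * (1/2:ℝ) ^ k := by
            show 2 * Real.pi / 2 ^ k = 2 * Real.pi * (1/2:ℝ) ^ k
            rw [div_eq_mul_inv, ← inv_pow]; norm_num
          rw [e]
          calc 2 * Real.pi * (1/2:ℝ) ^ k ≤ 2 * Real.pi * (|t - s| / (2 * Real.pi)) := by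
                apply mul_le_mul_of_nonneg_left hk.le (by positivity)
            _ = |t - s| := by field_simp
        have hmex : ∃ m : ℕ, δn m ≤ |t - s| ∧ |t - s| < 2 * δn m := by
          classical
          refine ⟨Nat.find hex, Nat.find_spec hex, ?_⟩
          have hm0 : Nat.find hex ≠ 0 := by
            intro h0
            have h1 : δn 0 ≤ |t - s| := by rw [← h0]; exact Nat.find_spec hex
            have h2 : δn 0 = 2 * Real.pi := by
              show 2 * Real.pi / 2 ^ (0:ℕ) = 2 * Real.pi; norm_num
            rw [h2] at h1; linarith
          have hlt : ¬ (δn (Nat.find hex - 1) ≤ |t - s|) :=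
            Nat.find_min hex (Nat.pred_lt hm0)
          have e : δn (Nat.find hex - 1) = 2 * δn (Nat.find hex) := by
            have e0 := hδhalf (Nat.find hex - 1)
            rw [Nat.sub_add_cancel (Nat.one_le_iff_ne_zero.mpr hm0)] at e0
            rw [e0]; ring
          rw [e] at hlt
          linarith [not_le.mp hlt]
        obtain ⟨m, hml, hd2⟩ := hmex
        have key : |φ t - φ s| ≤ |φ t - D m t| + |D m t - D m s| + |D m s - φ s| := by
          have e : φ t - φ s = (φ t - D m t) + (D m t - D m s) + (D m s - φ s) := by ring
          rw [e]
          exact (abs_add_le _ _).trans (add_le_add_left (abs_add_le _ _) _)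
        -- tail estimate
        have hrmσ : r ^ m ≤ |t - s| ^ σ / (2 * Real.pi) ^ σ := by
          have e1 : (r:ℝ) ^ m = ((1/2:ℝ) ^ m) ^ σ := by
            rw [hrdef, pow_half_rpow]
          have e2 : ((1/2:ℝ) ^ m : ℝ) = δn m / (2 * Real.pi) := by
            show ((1/2:ℝ) ^ m : ℝ) = 2 * Real.pi / 2 ^ m / (2 * Real.pi)
            have e2a : ((1:ℝ)/2) ^ m = 1 / 2 ^ m := by rw [div_pow, one_pow]
            rw [e2a, div_div, mul_comm ((2:ℝ)^m) (2*Real.pi), div_mul_eq_div_div,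
              div_self (ne_of_gt (by positivity : (0:ℝ) < 2*Real.pi))]
          have e3 : (δn m / (2 * Real.pi)) ^ σ ≤ (|t - s| / (2 * Real.pi)) ^ σ := by
            apply Real.rpow_le_rpow (by positivity)
            · apply div_le_div_of_nonneg_right hml (by positivity)
            · exact hσ0.le
          rw [e1, e2]
          calc (δn m / (2 * Real.pi)) ^ σ ≤ (|t - s| / (2 * Real.pi)) ^ σ := e3
            _ = |t - s| ^ σ / (2 * Real.pi) ^ σ := Real.div_rpow (abs_nonneg _) (by positivity) σ
        have htail' : ∀ x : ℝ, K * r ^ (m + 1) / (1 - r)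
            ≤ Real.pi * Cf * Cg / (1 - r) * |t - s| ^ σ := by
          intro _
          have h1 : K * r ^ (m + 1) ≤ K * r ^ m :=
            mul_le_mul_of_nonneg_left
              (pow_le_pow_of_le_one hr0.le hr1.le (Nat.le_succ m)) hK0
          have h2 : K * r ^ m ≤ K * (|t - s| ^ σ / (2 * Real.pi) ^ σ) := by
            apply mul_le_mul_of_nonneg_left hrmσ hK0
          have halg2 : ∀ (A X c : ℝ), c ≠ 0 → (A / 2 * c) * (X / c) = A / 2 * X := by
            intro A X c hc; field_simp
          have h3 : K * (|t - s| ^ σ / (2 * Real.pi) ^ σ) = Real.pi * Cf * Cg * |t - s| ^ σ := by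
            rw [hKdef, halg2 M (|t - s| ^ σ) _ (ne_of_gt h2πσ), hMdef]; ring
          have h4 : K * r ^ (m + 1) ≤ Real.pi * Cf * Cg * |t - s| ^ σ := by
            calc K * r ^ (m + 1) ≤ K * r ^ m := h1
              _ ≤ K * (|t - s| ^ σ / (2 * Real.pi) ^ σ) := h2
              _ = Real.pi * Cf * Cg * |t - s| ^ σ := h3
          rw [div_mul_eq_mul_div]
          exact div_le_div_of_nonneg_right h4 h1r.le
        -- middle estimate
        have hmid : |D m t - D m s| ≤ M * (2:ℝ) ^ (1 - α) * |t - s| ^ σ := by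
          have h0 := hDmod m t s
          have e1 : (δn m) ^ α / δn m = (δn m) ^ (α - 1) := by
            rw [Real.rpow_sub (hδpos m), Real.rpow_one]
          have e2 : (δn m) ^ (α - 1) ≤ (|t - s| / 2) ^ (α - 1) :=
            Real.rpow_le_rpow_of_nonpos (by linarith : (0:ℝ) < |t - s| / 2)
              (by linarith : |t - s| / 2 ≤ δn m) (by linarith : α - 1 ≤ 0)
          have e3 : (|t - s| / 2) ^ (α - 1) = |t - s| ^ (α - 1) * (2:ℝ) ^ (1 - α) := by
            rw [Real.div_rpow (abs_nonneg _) (by norm_num : (0:ℝ) ≤ 2)]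
            rw [show (1 - α : ℝ) = -(α - 1) by ring, Real.rpow_neg (by norm_num : (0:ℝ) ≤ 2)]
            rw [div_eq_mul_inv]
          have e4 : |t - s| ^ (α - 1) * |t - s| ^ β = |t - s| ^ σ := by
            rw [← Real.rpow_add hdpos]
            congr 1
            rw [hσdef]; ring
          calc |D m t - D m s| ≤ M * (δn m) ^ α / δn m * |t - s| ^ β := h0
            _ = M * (δn m) ^ (α - 1) * |t - s| ^ β := by
                rw [mul_div_assoc, e1]
            _ ≤ M * (|t - s| / 2) ^ (α - 1) * |t - s| ^ β := by
                apply mul_le_mul_of_nonneg_right _ (Real.rpow_nonneg (abs_nonneg _) β)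
                exact mul_le_mul_of_nonneg_left e2 hM0
            _ = M * (2:ℝ) ^ (1 - α) * (|t - s| ^ (α - 1) * |t - s| ^ β) := by rw [e3]; ring
            _ = M * (2:ℝ) ^ (1 - α) * |t - s| ^ σ := by rw [e4]
        have ht1 : |φ t - D m t| ≤ Real.pi * Cf * Cg / (1 - r) * |t - s| ^ σ :=
          (htail m t).trans (htail' t)
        have ht2 : |D m s - φ s| ≤ Real.pi * Cf * Cg / (1 - r) * |t - s| ^ σ := by
          rw [abs_sub_comm]
          exact (htail m s).trans (htail' s)
        have hQsum : Real.pi * Cf * Cg / (1 - r) * |t - s| ^ σ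
            + M * (2:ℝ) ^ (1 - α) * |t - s| ^ σ
            + Real.pi * Cf * Cg / (1 - r) * |t - s| ^ σ
            = Q1 * (Cf * Cg) * |t - s| ^ σ := by
          rw [hQ1def, hMdef]
          ring
        have hfin : Q1 * (Cf * Cg) * |t - s| ^ σ
            ≤ (σ * P0 + Q1 + 2 * P0) * Cf * Cg * |t - s| ^ σ := by
          have hσP0 : 0 ≤ σ * P0 := mul_nonneg hσ0.le hP0pos.le
          have h5 : Q1 ≤ σ * P0 + Q1 + 2 * P0 := by linarith
          calc Q1 * (Cf * Cg) * |t - s| ^ σ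
              ≤ (σ * P0 + Q1 + 2 * P0) * (Cf * Cg) * |t - s| ^ σ :=
                mul_le_mul_of_nonneg_right
                  (mul_le_mul_of_nonneg_right h5 (mul_nonneg hCf hCg))
                  (Real.rpow_nonneg (abs_nonneg _) σ)
            _ = (σ * P0 + Q1 + 2 * P0) * Cf * Cg * |t - s| ^ σ := by ring
        calc |φ t - φ s| ≤ |φ t - D m t| + |D m t - D m s| + |D m s - φ s| := key
          _ ≤ Real.pi * Cf * Cg / (1 - r) * |t - s| ^ σ
              + M * (2:ℝ) ^ (1 - α) * |t - s| ^ σ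
              + Real.pi * Cf * Cg / (1 - r) * |t - s| ^ σ := by
            exact add_le_add (add_le_add ht1 hmid) ht2
          _ = Q1 * (Cf * Cg) * |t - s| ^ σ := hQsum
          _ ≤ (σ * P0 + Q1 + 2 * P0) * Cf * Cg * |t - s| ^ σ := hfin
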